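/- Let n ≥ 2 be an integer, let t be an integer with 1 ≤ t ≤ n/2, let p be a real number with 0 < p ≤ 1/2, and set c = n/2 (as a real number). Then (1/10) · p · (1 − p/c)^{t−1} · (1 − (1 − p/c)^{n−t}) ≥ p²/(20·e^{2p}). -/
import Mathlib


theorem stmt_4 (n t : ℕ) (hn : 2 ≤ n) (ht1 : 1 ≤ t) (ht2 : (t : ℝ) ≤ (n : ℝ) / 2)
    (p : ℝ) (hp0 : 0 < p) (hp1 : p ≤ 1 / 2) (c : ℝ) (hc : c = (n : ℝ) / 2) :
    p ^ 2 / (20 * Real.exp (2 * p)) ≤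
      (1 / 10) * p * (1 - p / c) ^ (t - 1) * (1 - (1 - p / c) ^ (n - t)) := by
  have hc1 : (1 : ℝ) ≤ c := by
    rw [hc]
    have : (2 : ℝ) ≤ (n : ℝ) := by exact_mod_cast hn
    linarith
  have hc0 : (0 : ℝ) < c := by linarith
  set x := p / c with hxdef
  have hx0 : 0 < x := div_pos hp0 hc0
  have hx12 : x ≤ 1 / 2 := by
    have : x ≤ p := by
      rw [hxdef]
      rw [div_le_iff₀ hc0]
      nlinarith
    linarith
  have hq0 : (0 : ℝ) ≤ 1 - x := by linarith
  -- exp(-(2x)) ≤ 1 - x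
  have h1 : Real.exp (-(2 * x)) ≤ 1 - x := by
    have h := Real.add_one_le_exp (2 * x)
    have hm : Real.exp (-(2 * x)) * Real.exp (2 * x) = 1 := by
      rw [← Real.exp_add]; simp
    nlinarith [Real.exp_pos (2 * x), Real.exp_pos (-(2 * x))]
  -- 1 - x ≤ exp(-x)
  have h2 : 1 - x ≤ Real.exp (-x) := by
    have := Real.add_one_le_exp (-x)
    linarith
  have htn : (t : ℝ) ≤ c := by rw [hc]; exact ht2
  -- cast facts
  have htn' : t ≤ n := by
    have : (t : ℝ) ≤ (n : ℝ) := le_trans ht2 (by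
      have : (0:ℝ) ≤ (n:ℝ) := Nat.cast_nonneg n
      linarith)
    exact_mod_cast this
  have hcast1 : ((t - 1 : ℕ) : ℝ) = (t : ℝ) - 1 := by
    have := Nat.cast_sub ht1 (R := ℝ)
    simpa using this
  have hcast2 : ((n - t : ℕ) : ℝ) = (n : ℝ) - t := by
    have := Nat.cast_sub htn' (R := ℝ)
    simpa using this
  -- lower bound on first power
  have hA : Real.exp (-(2 * p)) ≤ (1 - x) ^ (t - 1) := by
    calc Real.exp (-(2 * p)) ≤ Real.exp ((t - 1 : ℕ) * (-(2 * x))) := by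
          apply Real.exp_le_exp.mpr
          rw [hcast1, hxdef]
          have key : p / c * ((t : ℝ) - 1) ≤ p := by
            rw [div_mul_eq_mul_div, div_le_iff₀ hc0]
            nlinarith
          nlinarith
      _ = (Real.exp (-(2 * x))) ^ (t - 1) := by
          rw [← Real.exp_nat_mul]
      _ ≤ (1 - x) ^ (t - 1) := by
          exact pow_le_pow_left₀ (Real.exp_pos _).le h1 _
  -- upper bound on second power
  have hB : p / 2 ≤ 1 - (1 - x) ^ (n - t) := by
    have hup : (1 - x) ^ (n - t) ≤ Real.exp (-p) := by
      calc (1 - x) ^ (n - t) ≤ (Real.exp (-x)) ^ (n - t) :=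
            pow_le_pow_left₀ hq0 h2 _
        _ = Real.exp ((n - t : ℕ) * (-x)) := by rw [← Real.exp_nat_mul]
        _ ≤ Real.exp (-p) := by
            apply Real.exp_le_exp.mpr
            rw [hcast2, hxdef]
            have hnt : c ≤ (n : ℝ) - t := by rw [hc]; linarith
            have : p ≤ ((n:ℝ) - t) * (p / c) := by
              rw [mul_div_assoc', le_div_iff₀ hc0]
              nlinarith
            linarith
    have hep : Real.exp (-p) ≤ 1 - p / 2 := by
      have h := Real.add_one_le_exp p
      have hm : Real.exp (-p) * Real.exp p = 1 := by
        rw [← Real.exp_add]; simp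
      nlinarith [Real.exp_pos p, Real.exp_pos (-p)]
    linarith
  have hfin : p ^ 2 / (20 * Real.exp (2 * p))
      = 1 / 10 * p * Real.exp (-(2 * p)) * (p / 2) := by
    rw [Real.exp_neg]
    have := (Real.exp_pos (2 * p)).ne'
    field_simp
    ring
  rw [hfin]
  have h10p : (0 : ℝ) ≤ 1 / 10 * p := by linarith
  have hAnn : (0 : ℝ) ≤ (1 - x) ^ (t - 1) := pow_nonneg hq0 _
  calc 1 / 10 * p * Real.exp (-(2 * p)) * (p / 2)
      ≤ 1 / 10 * p * (1 - x) ^ (t - 1) * (p / 2) := by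
        apply mul_le_mul_of_nonneg_right _ (by linarith)
        exact mul_le_mul_of_nonneg_left hA h10p
    _ ≤ 1 / 10 * p * (1 - x) ^ (t - 1) * (1 - (1 - x) ^ (n - t)) := by
        apply mul_le_mul_of_nonneg_left hB
        positivity
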